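/- Let X be a lazy simple random walk on Z^d started at 0, let (D_s)_{s≤t} be finite subsets of Z^d symmetric about the origin (D_s = −D_s), and let σ be a reflection of Z^d. Then E[ vol( ∪_{s=0}^t (X_s + D_s) ) ] ≥ E[ vol( ∪_{s=0}^t (X_s + D_s^σ) ) ], where D^σ is the two-point rearrangement of D with respect to σ. -/

import Mathlib

open scoped ENNReal Classical

/-- Graph (L¹) distance on `ℤ^d`. -/
def zdist {d : ℕ} (x y : Fin d → ℤ) : ℕ :=
  ∑ i, (x i - y i).natAbs

/-- Transition kernel of the lazy simple random walk on `ℤ^d`. -/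
noncomputable def lazyPZ (d : ℕ) (x y : Fin d → ℤ) : ℝ≥0∞ :=
  (if y = x then 1 / 2 else 0) +
    (∑ i : Fin d,
        ((if y = Function.update x i (x i + 1) then (1 : ℝ≥0∞) else 0) +
          (if y = Function.update x i (x i - 1) then (1 : ℝ≥0∞) else 0))) / (4 * d)

/-- Expected volume `E[vol(∪_{s=0}^t (X_s + D_s))]` for the walk with kernel `P`
started at `0`, computed as a sum over paths `ω = (X_0, X_1, …, X_t)`. -/
noncomputable def esaus (d t : ℕ) (P : (Fin d → ℤ) → (Fin d → ℤ) → ℝ≥0∞)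
    (D : ℕ → Finset (Fin d → ℤ)) : ℝ≥0∞ :=
  ∑' ω : Fin (t + 1) → Fin d → ℤ,
    (if ω 0 = 0 then (1 : ℝ≥0∞) else 0) *
      (∏ i : Fin t, P (ω i.castSucc) (ω i.succ)) *
        ((Finset.univ.biUnion fun s : Fin (t + 1) =>
            (D s).image fun z => ω s + z).card : ℝ≥0∞)

/-- Two-point rearrangement `D^σ` of a finite set `D` with respect to a reflection `σ`
with half-spaces `Hp` and `Hm`. -/
noncomputable def rearr {V : Type*} [DecidableEq V] (σ : V → V) (Hp Hm : Set V)
    (D : Finset V) : Finset V :=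
  ((D ∪ D.image σ).filter fun x => x ∈ Hp) ∪
    ((D ∩ D.image σ).filter fun x => x ∈ Hm) ∪
      (D.filter fun x => x ∉ Hp ∧ x ∉ Hm)

lemma zdist_eq_zero_iff {d : ℕ} {x y : Fin d → ℤ} : zdist x y = 0 ↔ x = y := by
  unfold zdist
  rw [Finset.sum_eq_zero_iff]
  constructor
  · intro h; funext i
    have := h i (Finset.mem_univ i)
    omega
  · intro h i _; subst h; simp

lemma zdist_comm {d : ℕ} (x y : Fin d → ℤ) : zdist x y = zdist y x := by
  unfold zdist
  refine Finset.sum_congr rfl fun i _ => ?_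
  omega

lemma zdist_update {d : ℕ} (x : Fin d → ℤ) (i : Fin d) (e : ℤ) :
    zdist x (Function.update x i (x i + e)) = e.natAbs := by
  unfold zdist
  rw [Finset.sum_eq_single i]
  · simp
  · intro j _ hj
    rw [Function.update_of_ne hj]; omega
  · simp

lemma sum_ind_eq {d : ℕ} (x y : Fin d → ℤ) :
    (∑ i : Fin d,
        ((if y = Function.update x i (x i + 1) then (1 : ℝ≥0∞) else 0) +
          (if y = Function.update x i (x i - 1) then (1 : ℝ≥0∞) else 0))) =
      if zdist x y = 1 then 1 else 0 := by
  by_cases h : zdist x y = 1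
  · rw [if_pos h]
    have h1 : ∃ i, (x i - y i).natAbs ≠ 0 := by
      by_contra hc
      push_neg at hc
      have : zdist x y = 0 := Finset.sum_eq_zero fun i _ => hc i
      omega
    obtain ⟨i₀, hi₀⟩ := h1
    have hsplit := Finset.add_sum_erase Finset.univ (fun i => (x i - y i).natAbs)
      (Finset.mem_univ i₀)
    rw [show (∑ i, (x i - y i).natAbs) = zdist x y from rfl, h] at hsplit
    have h2 : (x i₀ - y i₀).natAbs = 1 := by omega
    have h2' : ∑ j ∈ Finset.univ.erase i₀, (x j - y j).natAbs = 0 := by omega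
    have hrest : ∀ j, j ≠ i₀ → y j = x j := by
      intro j hj
      have := (Finset.sum_eq_zero_iff.mp h2') j (Finset.mem_erase.mpr ⟨hj, Finset.mem_univ j⟩)
      omega
    have hupne : Function.update x i₀ (x i₀ + 1) ≠ Function.update x i₀ (x i₀ - 1) := by
      intro hc
      have := congrFun hc i₀
      simp at this
      omega
    have hyi : y i₀ = x i₀ + 1 ∨ y i₀ = x i₀ - 1 := by omega
    rw [Finset.sum_eq_single i₀]
    · rcases hyi with hy | hy
      · have hyeq : y = Function.update x i₀ (x i₀ + 1) := by
          funext j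
          by_cases hj : j = i₀
          · subst hj; simp [hy]
          · rw [Function.update_of_ne hj]; exact hrest j hj
        rw [if_pos hyeq, if_neg (hyeq ▸ hupne), add_zero]
      · have hyeq : y = Function.update x i₀ (x i₀ - 1) := by
          funext j
          by_cases hj : j = i₀
          · subst hj; simp [hy]
          · rw [Function.update_of_ne hj]; exact hrest j hj
        rw [if_pos hyeq, if_neg (hyeq ▸ hupne.symm), zero_add]
    · intro j _ hj
      have hne : ∀ c : ℤ, y ≠ Function.update x j c := by
        intro c hc
        have h3 := congrFun hc i₀
        rw [Function.update_of_ne (Ne.symm hj)] at h3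
        omega
      rw [if_neg (hne _), if_neg (hne _), add_zero]
    · simp
  · rw [if_neg h]
    refine Finset.sum_eq_zero fun i _ => ?_
    have hne1 : y ≠ Function.update x i (x i + 1) := by
      intro hc
      apply h
      rw [hc, zdist_update]
      rfl
    have hne2 : y ≠ Function.update x i (x i - 1) := by
      intro hc
      apply h
      rw [hc, show x i - 1 = x i + (-1) by ring, zdist_update]
      rfl
    rw [if_neg hne1, if_neg hne2, add_zero]

lemma lazyPZ_eq {d : ℕ} (x y : Fin d → ℤ) :
    lazyPZ d x y = (if zdist x y = 0 then 1 / 2 else 0) +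
      (if zdist x y = 1 then 1 else 0) / (4 * d) := by
  unfold lazyPZ
  rw [sum_ind_eq]
  congr 1
  by_cases h : y = x
  · subst h
    rw [if_pos rfl, if_pos (zdist_eq_zero_iff.mpr rfl)]
  · rw [if_neg h, if_neg (fun hc => h (zdist_eq_zero_iff.mp hc).symm)]

lemma lazyPZ_congr {d : ℕ} {x y x' y' : Fin d → ℤ} (h : zdist x y = zdist x' y') :
    lazyPZ d x y = lazyPZ d x' y' := by
  rw [lazyPZ_eq, lazyPZ_eq, h]

section Paths
variable {d : ℕ}

noncomputable def hsum (n : ℕ) (z : Fin d → ℤ) (A : ℕ → Finset (Fin d → ℤ)) : ℝ≥0∞ :=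
  ∑' ω : Fin (n + 1) → Fin d → ℤ,
    (if ω 0 = z then (1 : ℝ≥0∞) else 0) *
      (∏ i : Fin n, lazyPZ d (ω i.castSucc) (ω i.succ)) *
        (if ∃ s : Fin (n + 1), ω s ∈ A s then (1 : ℝ≥0∞) else 0)

noncomputable def wsum (n : ℕ) (z : Fin d → ℤ) : ℝ≥0∞ :=
  ∑' ω : Fin (n + 1) → Fin d → ℤ,
    (if ω 0 = z then (1 : ℝ≥0∞) else 0) *
      (∏ i : Fin n, lazyPZ d (ω i.castSucc) (ω i.succ))

noncomputable def rconst (d : ℕ) : ℝ≥0∞ := ∑' y : Fin d → ℤ, lazyPZ d 0 y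

lemma peel (n : ℕ) (z : Fin d → ℤ) (F : (Fin (n + 2) → Fin d → ℤ) → ℝ≥0∞) :
    (∑' ω : Fin (n + 2) → Fin d → ℤ,
      (if ω 0 = z then (1 : ℝ≥0∞) else 0) *
        (∏ i : Fin (n + 1), lazyPZ d (ω i.castSucc) (ω i.succ)) * F ω)
    = ∑' y : Fin d → ℤ, lazyPZ d z y *
        ∑' ν : Fin (n + 1) → Fin d → ℤ,
          (if ν 0 = y then (1 : ℝ≥0∞) else 0) *
            (∏ i : Fin n, lazyPZ d (ν i.castSucc) (ν i.succ)) * F (Fin.cons z ν) := by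
  have key : ∀ (x : Fin d → ℤ) (ν : Fin (n + 1) → Fin d → ℤ),
      (∏ i : Fin (n + 1),
        lazyPZ d ((Fin.cons x ν : Fin (n + 2) → Fin d → ℤ) i.castSucc)
          ((Fin.cons x ν : Fin (n + 2) → Fin d → ℤ) i.succ))
        = lazyPZ d x (ν 0) * ∏ i : Fin n, lazyPZ d (ν i.castSucc) (ν i.succ) := by
    intro x ν
    rw [Fin.prod_univ_succ]
    simp only [← Fin.succ_castSucc, Fin.cons_succ, Fin.castSucc_zero, Fin.cons_zero]
  rw [← (Fin.consEquiv (fun _ : Fin (n + 2) => (Fin d → ℤ))).tsum_eq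
    (fun ω : Fin (n + 2) → Fin d → ℤ =>
      (if ω 0 = z then (1 : ℝ≥0∞) else 0) *
        (∏ i : Fin (n + 1), lazyPZ d (ω i.castSucc) (ω i.succ)) * F ω)]
  rw [ENNReal.tsum_prod']
  have step1 : ∀ (x : Fin d → ℤ) (ν : Fin (n + 1) → Fin d → ℤ),
      (fun ω : Fin (n + 2) → Fin d → ℤ =>
        (if ω 0 = z then (1 : ℝ≥0∞) else 0) *
          (∏ i : Fin (n + 1), lazyPZ d (ω i.castSucc) (ω i.succ)) * F ω)
        ((Fin.consEquiv (fun _ : Fin (n + 2) => (Fin d → ℤ))) (x, ν))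
      = (if x = z then (1 : ℝ≥0∞) else 0) *
          (lazyPZ d x (ν 0) * ∏ i : Fin n, lazyPZ d (ν i.castSucc) (ν i.succ)) *
            F (Fin.cons x ν) := by
    intro x ν
    have : (Fin.consEquiv (fun _ : Fin (n + 2) => (Fin d → ℤ))) (x, ν) = Fin.cons x ν := rfl
    rw [this]
    simp only [key, Fin.cons_zero]
  rw [tsum_congr fun x => tsum_congr fun ν => step1 x ν]
  rw [tsum_eq_single z (by
    intro x hx
    rw [if_neg hx]
    simp)]
  rw [if_pos rfl]
  refine Eq.symm ?_
  calc (∑' y : Fin d → ℤ, lazyPZ d z y *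
        ∑' ν : Fin (n + 1) → Fin d → ℤ,
          (if ν 0 = y then (1 : ℝ≥0∞) else 0) *
            (∏ i : Fin n, lazyPZ d (ν i.castSucc) (ν i.succ)) * F (Fin.cons z ν))
      = ∑' y : Fin d → ℤ, ∑' ν : Fin (n + 1) → Fin d → ℤ,
          lazyPZ d z y * ((if ν 0 = y then (1 : ℝ≥0∞) else 0) *
            (∏ i : Fin n, lazyPZ d (ν i.castSucc) (ν i.succ)) * F (Fin.cons z ν)) := by
        refine tsum_congr fun y => ?_
        rw [ENNReal.tsum_mul_left]
    _ = ∑' ν : Fin (n + 1) → Fin d → ℤ, ∑' y : Fin d → ℤ,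
          lazyPZ d z y * ((if ν 0 = y then (1 : ℝ≥0∞) else 0) *
            (∏ i : Fin n, lazyPZ d (ν i.castSucc) (ν i.succ)) * F (Fin.cons z ν)) :=
        ENNReal.tsum_comm
    _ = ∑' ν : Fin (n + 1) → Fin d → ℤ,
          1 * (lazyPZ d z (ν 0) * ∏ i : Fin n, lazyPZ d (ν i.castSucc) (ν i.succ)) *
            F (Fin.cons z ν) := by
        refine tsum_congr fun ν => ?_
        rw [tsum_eq_single (ν 0) (by
          intro y hy
          rw [if_neg (Ne.symm hy)]
          ring)]
        rw [if_pos rfl]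
        ring

def constEquiv : ((Fin d → ℤ)) ≃ (Fin 1 → Fin d → ℤ) :=
  ⟨fun x _ => x, fun ω => ω 0, fun x => rfl,
   fun ω => by funext i; exact congrArg ω (Subsingleton.elim _ _)⟩

lemma hsum_zero (z : Fin d → ℤ) (A : ℕ → Finset (Fin d → ℤ)) :
    hsum 0 z A = if z ∈ A 0 then (1 : ℝ≥0∞) else 0 := by
  unfold hsum
  rw [← (constEquiv (d := d)).tsum_eq]
  rw [tsum_eq_single z (by
    intro x hx
    rw [show (constEquiv : _ ≃ (Fin 1 → Fin d → ℤ)) x = fun _ => x from rfl]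
    rw [if_neg hx]
    simp)]
  rw [show (constEquiv : _ ≃ (Fin 1 → Fin d → ℤ)) z = fun _ => z from rfl]
  rw [if_pos rfl]
  simp [Fin.exists_fin_one]

lemma wsum_zero (z : Fin d → ℤ) : wsum 0 z = 1 := by
  unfold wsum
  rw [← (constEquiv (d := d)).tsum_eq]
  rw [tsum_eq_single z (by
    intro x hx
    rw [show (constEquiv : _ ≃ (Fin 1 → Fin d → ℤ)) x = fun _ => x from rfl]
    rw [if_neg hx]
    simp)]
  rw [show (constEquiv : _ ≃ (Fin 1 → Fin d → ℤ)) z = fun _ => z from rfl]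
  simp

lemma wsum_succ (n : ℕ) (z : Fin d → ℤ) :
    wsum (n + 1) z = ∑' y : Fin d → ℤ, lazyPZ d z y * wsum n y := by
  unfold wsum
  have := peel n z (fun _ => (1 : ℝ≥0∞))
  simp only [mul_one] at this
  exact this

lemma row_sum (z : Fin d → ℤ) : ∑' y : Fin d → ℤ, lazyPZ d z y = rconst d := by
  unfold rconst
  rw [← Equiv.tsum_eq (⟨fun y => z - y, fun y => z - y, fun y => by simp, fun y => by simp⟩ :
      (Fin d → ℤ) ≃ (Fin d → ℤ)) (fun y => lazyPZ d z y)]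
  refine tsum_congr fun u => ?_
  simp only [Equiv.coe_fn_mk]
  show lazyPZ d z (z - u) = lazyPZ d 0 u
  refine lazyPZ_congr ?_
  unfold zdist
  refine Finset.sum_congr rfl fun i _ => ?_
  simp only [Pi.sub_apply, Pi.zero_apply]
  omega

lemma wsum_eq (n : ℕ) (z : Fin d → ℤ) : wsum n z = rconst d ^ n := by
  induction n generalizing z with
  | zero => rw [wsum_zero, pow_zero]
  | succ n ih =>
    rw [wsum_succ]
    simp only [ih]
    rw [ENNReal.tsum_mul_right, row_sum]
    ring

lemma hsum_succ (n : ℕ) (z : Fin d → ℤ) (A : ℕ → Finset (Fin d → ℤ)) :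
    hsum (n + 1) z A = if z ∈ A 0 then rconst d ^ (n + 1)
      else ∑' y : Fin d → ℤ, lazyPZ d z y * hsum n y (fun k => A (k + 1)) := by
  by_cases hz : z ∈ A 0
  · rw [if_pos hz, ← wsum_eq (n + 1) z]
    unfold hsum wsum
    refine tsum_congr fun ω => ?_
    by_cases h0 : ω 0 = z
    · rw [if_pos h0, if_pos ⟨0, by simpa [h0] using hz⟩, mul_one]
    · rw [if_neg h0]
      ring
  · rw [if_neg hz]
    unfold hsum
    rw [peel n z (fun ω => if ∃ s : Fin (n + 2), ω s ∈ A s then (1 : ℝ≥0∞) else 0)]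
    refine tsum_congr fun y => ?_
    congr 1
    refine tsum_congr fun ν => ?_
    congr 1
    have : (∃ s : Fin (n + 2), (Fin.cons z ν : Fin (n + 2) → Fin d → ℤ) s ∈ A s)
        ↔ (∃ s : Fin (n + 1), ν s ∈ A ((s : ℕ) + 1)) := by
      rw [Fin.exists_fin_succ]
      simp only [Fin.cons_zero, Fin.cons_succ, Fin.val_succ]
      exact or_iff_right (by simpa using hz)
    simp only [this]

lemma hsum_le_wsum (n : ℕ) (z : Fin d → ℤ) (A : ℕ → Finset (Fin d → ℤ)) :
    hsum n z A ≤ rconst d ^ n := by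
  induction n generalizing z A with
  | zero =>
    rw [hsum_zero]
    split <;> simp
  | succ n ih =>
    rw [hsum_succ]
    split
    · exact le_refl _
    · calc (∑' y : Fin d → ℤ, lazyPZ d z y * hsum n y fun k => A (k + 1))
          ≤ ∑' y : Fin d → ℤ, lazyPZ d z y * rconst d ^ n :=
            Summable.tsum_le_tsum (fun y => mul_le_mul_right (ih y _) _)
              ENNReal.summable ENNReal.summable
        _ = rconst d ^ (n + 1) := by
            rw [ENNReal.tsum_mul_right, row_sum]; ring

lemma zdist_sub_left (z x y : Fin d → ℤ) : zdist (z - x) (z - y) = zdist x y := by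
  unfold zdist
  refine Finset.sum_congr rfl fun i _ => ?_
  simp only [Pi.sub_apply]
  omega

lemma lazyPZ_self (z : Fin d → ℤ) : lazyPZ d z z = 1 / 2 := by
  rw [lazyPZ_eq, if_pos (zdist_eq_zero_iff.mpr rfl),
    if_neg (by rw [zdist_eq_zero_iff.mpr rfl]; omega), ENNReal.zero_div, add_zero]

lemma lazyPZ_cases (z y : Fin d → ℤ) (h0 : zdist z y ≠ 0) (h1 : zdist z y ≠ 1) :
    lazyPZ d z y = 0 := by
  rw [lazyPZ_eq, if_neg h0, if_neg h1, ENNReal.zero_div, add_zero]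

lemma lazyPZ_le_stay (z w : Fin d → ℤ) : lazyPZ d z w ≤ lazyPZ d z z := by
  by_cases hzw : zdist z w = 0
  · have hq := zdist_eq_zero_iff.mp hzw
    subst hq
    exact le_refl _
  by_cases h1 : zdist z w = 1
  · have hd : 1 ≤ d := by
      by_contra hd
      have hd0 : d = 0 := by omega
      subst hd0
      have : w = z := funext fun i => i.elim0
      rw [this, zdist_eq_zero_iff.mpr rfl] at h1
      omega
    rw [lazyPZ_eq, if_neg hzw, if_pos h1, lazyPZ_self, zero_add]
    refine le_trans (ENNReal.div_le_div_left (show (2:ℝ≥0∞) ≤ 4 * d by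
      calc (2:ℝ≥0∞) ≤ 4 * 1 := by norm_num
        _ ≤ 4 * d := by
            gcongr
            exact_mod_cast hd) 1) ?_
    exact le_refl _
  · rw [lazyPZ_cases z w hzw h1]
    exact zero_le

end Paths

section Geom

variable {d : ℕ} {σ : (Fin d → ℤ) → (Fin d → ℤ)} {Hp Hm : Set (Fin d → ℤ)}

lemma sigma_Hm (hmap : σ '' Hp = Hm) {x : Fin d → ℤ} (hx : x ∈ Hp) : σ x ∈ Hm := by
  rw [← hmap]; exact ⟨x, hx, rfl⟩

lemma sigma_Hp (hinv : ∀ x, σ (σ x) = x) (hmap : σ '' Hp = Hm) {x : Fin d → ℤ}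
    (hx : x ∈ Hm) : σ x ∈ Hp := by
  rw [← hmap] at hx
  obtain ⟨p, hp, hpx⟩ := hx
  rw [← hpx, hinv]
  exact hp

lemma mem_image_sigma (hinv : ∀ x, σ (σ x) = x) {D : Finset (Fin d → ℤ)} {z : Fin d → ℤ} :
    z ∈ D.image σ ↔ σ z ∈ D := by
  rw [Finset.mem_image]
  constructor
  · rintro ⟨a, ha, rfl⟩
    rw [hinv]
    exact ha
  · intro h
    exact ⟨σ z, h, hinv z⟩

lemma mem_rearr_Hp (hinv : ∀ x, σ (σ x) = x) (hdisj : Disjoint Hp Hm)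
    {D : Finset (Fin d → ℤ)} {z : Fin d → ℤ} (hz : z ∈ Hp) :
    z ∈ rearr σ Hp Hm D ↔ z ∈ D ∨ σ z ∈ D := by
  unfold rearr
  have hzm : z ∉ Hm := fun h => Set.disjoint_left.mp hdisj hz h
  simp only [Finset.mem_union, Finset.mem_filter, Finset.mem_inter,
    mem_image_sigma hinv, hz, hzm]
  tauto

lemma mem_rearr_Hm (hinv : ∀ x, σ (σ x) = x) (hdisj : Disjoint Hp Hm)
    {D : Finset (Fin d → ℤ)} {z : Fin d → ℤ} (hz : z ∈ Hm) :
    z ∈ rearr σ Hp Hm D ↔ z ∈ D ∧ σ z ∈ D := by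
  unfold rearr
  have hzp : z ∉ Hp := fun h => Set.disjoint_left.mp hdisj h hz
  simp only [Finset.mem_union, Finset.mem_filter, Finset.mem_inter,
    mem_image_sigma hinv, hz, hzp]
  tauto

lemma mem_rearr_fix {D : Finset (Fin d → ℤ)} {z : Fin d → ℤ}
    (hzp : z ∉ Hp) (hzm : z ∉ Hm) :
    z ∈ rearr σ Hp Hm D ↔ z ∈ D := by
  unfold rearr
  simp only [Finset.mem_union, Finset.mem_filter, Finset.mem_inter, hzp, hzm]
  tauto

lemma hm_neighbor (hinv : ∀ x, σ (σ x) = x) (hiso : ∀ x y, zdist (σ x) (σ y) = zdist x y)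
    (hdisj : Disjoint Hp Hm) (hmap : σ '' Hp = Hm)
    (hhalf : ∀ x ∈ Hp, ∀ y ∈ Hp, zdist x y < zdist x (σ y))
    {z y : Fin d → ℤ} (hz : z ∈ Hp) (hy : y ∈ Hm) (hP : lazyPZ d z y ≠ 0) :
    y = σ z := by
  have h01 : zdist z y = 0 ∨ zdist z y = 1 := by
    by_contra hc
    push_neg at hc
    exact hP (lazyPZ_cases z y hc.1 hc.2)
  have hne : zdist z y ≠ 0 := by
    intro h0
    rw [zdist_eq_zero_iff.mp h0] at hz
    exact Set.disjoint_left.mp hdisj hz hy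
  have h1 : zdist z y = 1 := by omega
  have hσy : σ y ∈ Hp := sigma_Hp hinv hmap hy
  have := hhalf z hz (σ y) hσy
  rw [hinv, h1] at this
  have h0 : zdist z (σ y) = 0 := by omega
  have : z = σ y := zdist_eq_zero_iff.mp h0
  rw [this, hinv]

end Geom

section Main

variable {d : ℕ} {σ : (Fin d → ℤ) → (Fin d → ℤ)} {Hp Hm : Set (Fin d → ℤ)}

lemma reindex_sigma (hinv : ∀ x, σ (σ x) = x) (f : (Fin d → ℤ) → ℝ≥0∞) :
    ∑' y, f (σ y) = ∑' y, f y :=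
  Equiv.tsum_eq ⟨σ, σ, hinv, hinv⟩ f

lemma tsum_peel_two {α : Type*} (z w : α) (hwz : w ≠ z) (f : α → ℝ≥0∞) :
    ∑' y, f y = f z + f w + ∑' y, if y = w then 0 else if y = z then 0 else f y := by
  rw [ENNReal.tsum_eq_add_tsum_ite z,
    ENNReal.tsum_eq_add_tsum_ite (f := fun y => if y = z then 0 else f y) w,
    if_neg hwz, ← add_assoc]

lemma sum_bound (n : ℕ) (z : Fin d → ℤ) (g : (Fin d → ℤ) → ℝ≥0∞)
    (hg : ∀ y, g y ≤ rconst d ^ n) :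
    (∑' y, lazyPZ d z y * g y) ≤ rconst d ^ (n + 1) := by
  calc (∑' y, lazyPZ d z y * g y) ≤ ∑' y, lazyPZ d z y * rconst d ^ n :=
      Summable.tsum_le_tsum (fun y => mul_le_mul_right (hg y) _) ENNReal.summable ENNReal.summable
    _ = rconst d ^ (n + 1) := by
      rw [ENNReal.tsum_mul_right, row_sum]; ring

lemma Jmain (hinv : ∀ x, σ (σ x) = x) (hiso : ∀ x y, zdist (σ x) (σ y) = zdist x y)
    (hdisj : Disjoint Hp Hm) (hmap : σ '' Hp = Hm)
    (hfix : ∀ x, x ∉ Hp → x ∉ Hm → σ x = x)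
    (hhalf : ∀ x ∈ Hp, ∀ y ∈ Hp, zdist x y < zdist x (σ y)) :
    ∀ (n : ℕ) (A : ℕ → Finset (Fin d → ℤ)),
      (∀ z ∈ Hp,
        hsum n (σ z) (fun s => rearr σ Hp Hm (A s)) ≤ hsum n z A ∧
        hsum n (σ z) (fun s => rearr σ Hp Hm (A s)) ≤ hsum n (σ z) A ∧
        hsum n z (fun s => rearr σ Hp Hm (A s)) + hsum n (σ z) (fun s => rearr σ Hp Hm (A s)) ≤
          hsum n z A + hsum n (σ z) A) ∧
      (∀ z, z ∉ Hp → z ∉ Hm → hsum n z (fun s => rearr σ Hp Hm (A s)) ≤ hsum n z A) := by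
  intro n
  induction n with
  | zero =>
    intro A
    constructor
    · intro z hz
      have hwm : σ z ∈ Hm := sigma_Hm hmap hz
      have hrz : z ∈ rearr σ Hp Hm (A 0) ↔ z ∈ A 0 ∨ σ z ∈ A 0 := mem_rearr_Hp hinv hdisj hz
      have hrw : σ z ∈ rearr σ Hp Hm (A 0) ↔ σ z ∈ A 0 ∧ z ∈ A 0 := by
        rw [mem_rearr_Hm hinv hdisj hwm, hinv]
      simp only [hsum_zero]
      by_cases h1 : z ∈ A 0 <;> by_cases h2 : σ z ∈ A 0 <;>
        simp [hrz, hrw, h1, h2]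
    · intro z hzp hzm
      simp only [hsum_zero]
      simp [mem_rearr_fix (σ := σ) hzp hzm]
  | succ n ih =>
    intro A
    have ihp := (ih (fun k => A (k + 1))).1
    have ihf := (ih (fun k => A (k + 1))).2
    constructor
    · intro z hz
      have hwm : σ z ∈ Hm := sigma_Hm hmap hz
      have hwz : σ z ≠ z := fun h => Set.disjoint_left.mp hdisj hz (h ▸ hwm)
      have hrz : z ∈ rearr σ Hp Hm (A 0) ↔ z ∈ A 0 ∨ σ z ∈ A 0 := mem_rearr_Hp hinv hdisj hz
      have hrw : σ z ∈ rearr σ Hp Hm (A 0) ↔ σ z ∈ A 0 ∧ z ∈ A 0 := by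
        rw [mem_rearr_Hm hinv hdisj hwm, hinv]
      have hbu : hsum n (σ z) (fun k => rearr σ Hp Hm (A (k + 1))) ≤
          hsum n z (fun k => A (k + 1)) := (ihp z hz).1
      have hbv : hsum n (σ z) (fun k => rearr σ Hp Hm (A (k + 1))) ≤
          hsum n (σ z) (fun k => A (k + 1)) := (ihp z hz).2.1
      have hab : hsum n z (fun k => rearr σ Hp Hm (A (k + 1))) +
            hsum n (σ z) (fun k => rearr σ Hp Hm (A (k + 1))) ≤
          hsum n z (fun k => A (k + 1)) + hsum n (σ z) (fun k => A (k + 1)) := (ihp z hz).2.2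
      obtain ⟨γ, hγ⟩ := le_iff_exists_add.mp (lazyPZ_le_stay z (σ z))
      -- reindexing
      have hre : ∀ C : ℕ → Finset (Fin d → ℤ),
          (∑' y, lazyPZ d (σ z) y * hsum n y C) = ∑' y, lazyPZ d z y * hsum n (σ y) C := by
        intro C
        rw [← reindex_sigma hinv (fun y => lazyPZ d (σ z) y * hsum n y C)]
        refine tsum_congr fun y => ?_
        rw [show lazyPZ d (σ z) (σ y) = lazyPZ d z y from lazyPZ_congr (hiso z y)]
      have hS2T1 : (∑' y, lazyPZ d z y * hsum n (σ y) (fun k => rearr σ Hp Hm (A (k + 1)))) ≤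
          ∑' y, lazyPZ d z y * hsum n y (fun k => A (k + 1)) := by
        rw [tsum_peel_two z (σ z) hwz
            (fun y => lazyPZ d z y * hsum n (σ y) (fun k => rearr σ Hp Hm (A (k + 1)))),
          tsum_peel_two z (σ z) hwz (fun y => lazyPZ d z y * hsum n y (fun k => A (k + 1)))]
        refine add_le_add ?_ (Summable.tsum_le_tsum (fun y => ?_) ENNReal.summable ENNReal.summable)
        swap
        · by_cases hy1 : y = σ z
          · simp [hy1]
          by_cases hy2 : y = z
          · simp [hy1, hy2]
          rw [if_neg hy1, if_neg hy2, if_neg hy1, if_neg hy2]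
          by_cases hyp : y ∈ Hp
          · exact mul_le_mul_right (ihp y hyp).1 _
          by_cases hym : y ∈ Hm
          · by_cases hP : lazyPZ d z y = 0
            · rw [hP]; simp
            · exact absurd (hm_neighbor hinv hiso hdisj hmap hhalf hz hym hP) hy1
          · have hfy : σ y = y := hfix y hyp hym
            rw [hfy]
            exact mul_le_mul_right (ihf y hyp hym) _
        rw [hinv]
        calc lazyPZ d z z * hsum n (σ z) (fun k => rearr σ Hp Hm (A (k + 1))) +
              lazyPZ d z (σ z) * hsum n z (fun k => rearr σ Hp Hm (A (k + 1)))
            = lazyPZ d z (σ z) * (hsum n z (fun k => rearr σ Hp Hm (A (k + 1))) +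
                hsum n (σ z) (fun k => rearr σ Hp Hm (A (k + 1)))) +
              γ * hsum n (σ z) (fun k => rearr σ Hp Hm (A (k + 1))) := by rw [hγ]; ring
          _ ≤ lazyPZ d z (σ z) * (hsum n z (fun k => A (k + 1)) + hsum n (σ z) (fun k => A (k + 1))) +
              γ * hsum n z (fun k => A (k + 1)) :=
            add_le_add (mul_le_mul_right hab _) (mul_le_mul_right hbu _)
          _ = lazyPZ d z z * hsum n z (fun k => A (k + 1)) +
              lazyPZ d z (σ z) * hsum n (σ z) (fun k => A (k + 1)) := by rw [hγ]; ring
      have hS2T2 : (∑' y, lazyPZ d z y * hsum n (σ y) (fun k => rearr σ Hp Hm (A (k + 1)))) ≤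
          ∑' y, lazyPZ d z y * hsum n (σ y) (fun k => A (k + 1)) := by
        rw [tsum_peel_two z (σ z) hwz
            (fun y => lazyPZ d z y * hsum n (σ y) (fun k => rearr σ Hp Hm (A (k + 1)))),
          tsum_peel_two z (σ z) hwz
            (fun y => lazyPZ d z y * hsum n (σ y) (fun k => A (k + 1)))]
        refine add_le_add ?_ (Summable.tsum_le_tsum (fun y => ?_) ENNReal.summable ENNReal.summable)
        swap
        · by_cases hy1 : y = σ z
          · simp [hy1]
          by_cases hy2 : y = z
          · simp [hy1, hy2]
          rw [if_neg hy1, if_neg hy2, if_neg hy1, if_neg hy2]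
          by_cases hyp : y ∈ Hp
          · exact mul_le_mul_right (ihp y hyp).2.1 _
          by_cases hym : y ∈ Hm
          · by_cases hP : lazyPZ d z y = 0
            · rw [hP]; simp
            · exact absurd (hm_neighbor hinv hiso hdisj hmap hhalf hz hym hP) hy1
          · have hfy : σ y = y := hfix y hyp hym
            rw [hfy]
            exact mul_le_mul_right (ihf y hyp hym) _
        rw [hinv]
        calc lazyPZ d z z * hsum n (σ z) (fun k => rearr σ Hp Hm (A (k + 1))) +
              lazyPZ d z (σ z) * hsum n z (fun k => rearr σ Hp Hm (A (k + 1)))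
            = lazyPZ d z (σ z) * (hsum n z (fun k => rearr σ Hp Hm (A (k + 1))) +
                hsum n (σ z) (fun k => rearr σ Hp Hm (A (k + 1)))) +
              γ * hsum n (σ z) (fun k => rearr σ Hp Hm (A (k + 1))) := by rw [hγ]; ring
          _ ≤ lazyPZ d z (σ z) * (hsum n z (fun k => A (k + 1)) + hsum n (σ z) (fun k => A (k + 1))) +
              γ * hsum n (σ z) (fun k => A (k + 1)) :=
            add_le_add (mul_le_mul_right hab _) (mul_le_mul_right hbv _)
          _ = lazyPZ d z z * hsum n (σ z) (fun k => A (k + 1)) +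
              lazyPZ d z (σ z) * hsum n z (fun k => A (k + 1)) := by rw [hγ]; ring
      have hS12 : (∑' y, lazyPZ d z y * hsum n y (fun k => rearr σ Hp Hm (A (k + 1)))) +
            (∑' y, lazyPZ d z y * hsum n (σ y) (fun k => rearr σ Hp Hm (A (k + 1)))) ≤
          (∑' y, lazyPZ d z y * hsum n y (fun k => A (k + 1))) +
            (∑' y, lazyPZ d z y * hsum n (σ y) (fun k => A (k + 1))) := by
        rw [← ENNReal.tsum_add, ← ENNReal.tsum_add]
        refine Summable.tsum_le_tsum (fun y => ?_) ENNReal.summable ENNReal.summable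
        rw [← mul_add, ← mul_add]
        refine mul_le_mul_right ?_ _
        by_cases hyp : y ∈ Hp
        · exact (ihp y hyp).2.2
        by_cases hym : y ∈ Hm
        · have h2 := (ihp (σ y) (sigma_Hp hinv hmap hym)).2.2
          rw [hinv] at h2
          calc hsum n y (fun k => rearr σ Hp Hm (A (k + 1))) +
                hsum n (σ y) (fun k => rearr σ Hp Hm (A (k + 1)))
              = hsum n (σ y) (fun k => rearr σ Hp Hm (A (k + 1))) +
                hsum n y (fun k => rearr σ Hp Hm (A (k + 1))) := by ring
            _ ≤ hsum n (σ y) (fun k => A (k + 1)) + hsum n y (fun k => A (k + 1)) := h2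
            _ = hsum n y (fun k => A (k + 1)) + hsum n (σ y) (fun k => A (k + 1)) := by ring
        · have hfy : σ y = y := hfix y hyp hym
          rw [hfy]
          exact add_le_add (ihf y hyp hym) (ihf y hyp hym)
      have hS2b : (∑' y, lazyPZ d z y * hsum n (σ y) (fun k => rearr σ Hp Hm (A (k + 1)))) ≤
          rconst d ^ (n + 1) :=
        sum_bound n z _ (fun y => hsum_le_wsum n (σ y) _)
      refine ⟨?_, ?_, ?_⟩
      · rw [hsum_succ, hsum_succ, hre]
        by_cases hw' : σ z ∈ rearr σ Hp Hm (A 0)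
        · rw [if_pos hw', if_pos (hrw.mp hw').2]
        · rw [if_neg hw']
          by_cases hz0 : z ∈ A 0
          · rw [if_pos hz0]; exact hS2b
          · rw [if_neg hz0]; exact hS2T1
      · rw [hsum_succ, hsum_succ, hre, hre]
        by_cases hw' : σ z ∈ rearr σ Hp Hm (A 0)
        · rw [if_pos hw', if_pos (hrw.mp hw').1]
        · rw [if_neg hw']
          by_cases hw0 : σ z ∈ A 0
          · rw [if_pos hw0]; exact hS2b
          · rw [if_neg hw0]; exact hS2T2
      · rw [hsum_succ, hsum_succ, hsum_succ, hsum_succ, hre, hre]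
        by_cases hz0 : z ∈ A 0 <;> by_cases hw0 : σ z ∈ A 0
        · rw [if_pos (hrz.mpr (Or.inl hz0)), if_pos (hrw.mpr ⟨hw0, hz0⟩),
            if_pos hz0, if_pos hw0]
        · rw [if_pos (hrz.mpr (Or.inl hz0)), if_neg (fun h => hw0 (hrw.mp h).1),
            if_pos hz0, if_neg hw0]
          exact add_le_add_right hS2T2 _
        · rw [if_pos (hrz.mpr (Or.inr hw0)), if_neg (fun h => hz0 (hrw.mp h).2),
            if_neg hz0, if_pos hw0]
          calc rconst d ^ (n + 1) + (∑' y, lazyPZ d z y *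
                hsum n (σ y) (fun k => rearr σ Hp Hm (A (k + 1))))
              ≤ rconst d ^ (n + 1) + ∑' y, lazyPZ d z y * hsum n y (fun k => A (k + 1)) :=
                add_le_add_right hS2T1 _
            _ = (∑' y, lazyPZ d z y * hsum n y (fun k => A (k + 1))) + rconst d ^ (n + 1) := by
                ring
        · rw [if_neg (fun h => (hrz.mp h).elim hz0 hw0), if_neg (fun h => hz0 (hrw.mp h).2),
            if_neg hz0, if_neg hw0]
          exact hS12
    · intro z hzp hzm
      have hσ : σ z = z := hfix z hzp hzm
      rw [hsum_succ, hsum_succ]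
      by_cases hz0 : z ∈ A 0
      · rw [if_pos ((mem_rearr_fix hzp hzm).mpr hz0), if_pos hz0]
      · rw [if_neg (fun h => hz0 ((mem_rearr_fix hzp hzm).mp h)), if_neg hz0]
        have hre' : ∀ C : ℕ → Finset (Fin d → ℤ),
            (∑' y, lazyPZ d z y * hsum n (σ y) C) = ∑' y, lazyPZ d z y * hsum n y C := by
          intro C
          rw [← reindex_sigma hinv (fun y => lazyPZ d z y * hsum n y C)]
          refine tsum_congr fun y => ?_
          rw [show lazyPZ d z (σ y) = lazyPZ d z y from lazyPZ_congr (by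
            calc zdist z (σ y) = zdist (σ z) (σ y) := by rw [hσ]
              _ = zdist z y := hiso z y)]
        have hdbl : (∑' y, lazyPZ d z y * hsum n y (fun k => rearr σ Hp Hm (A (k + 1)))) +
              (∑' y, lazyPZ d z y * hsum n (σ y) (fun k => rearr σ Hp Hm (A (k + 1)))) ≤
            (∑' y, lazyPZ d z y * hsum n y (fun k => A (k + 1))) +
              (∑' y, lazyPZ d z y * hsum n (σ y) (fun k => A (k + 1))) := by
          rw [← ENNReal.tsum_add, ← ENNReal.tsum_add]
          refine Summable.tsum_le_tsum (fun y => ?_) ENNReal.summable ENNReal.summable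
          rw [← mul_add, ← mul_add]
          refine mul_le_mul_right ?_ _
          by_cases hyp : y ∈ Hp
          · exact (ihp y hyp).2.2
          by_cases hym : y ∈ Hm
          · have h2 := (ihp (σ y) (sigma_Hp hinv hmap hym)).2.2
            rw [hinv] at h2
            calc hsum n y (fun k => rearr σ Hp Hm (A (k + 1))) +
                  hsum n (σ y) (fun k => rearr σ Hp Hm (A (k + 1)))
                = hsum n (σ y) (fun k => rearr σ Hp Hm (A (k + 1))) +
                  hsum n y (fun k => rearr σ Hp Hm (A (k + 1))) := by ring
              _ ≤ hsum n (σ y) (fun k => A (k + 1)) + hsum n y (fun k => A (k + 1)) := h2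
              _ = hsum n y (fun k => A (k + 1)) + hsum n (σ y) (fun k => A (k + 1)) := by ring
          · have hfy : σ y = y := hfix y hyp hym
            rw [hfy]
            exact add_le_add (ihf y hyp hym) (ihf y hyp hym)
        rw [hre', hre'] at hdbl
        have h2 : (2 : ℝ≥0∞) * (∑' y, lazyPZ d z y *
              hsum n y (fun k => rearr σ Hp Hm (A (k + 1)))) ≤
            2 * ∑' y, lazyPZ d z y * hsum n y (fun k => A (k + 1)) := by
          rw [two_mul, two_mul]
          exact hdbl
        exact (ENNReal.mul_le_mul_iff_right (by norm_num) (by norm_num)).mp h2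

end Main

section Assemble

lemma card_eq_tsum {d : ℕ} (S : Finset (Fin d → ℤ)) :
    (S.card : ℝ≥0∞) = ∑' z : Fin d → ℤ, if z ∈ S then (1 : ℝ≥0∞) else 0 := by
  rw [tsum_eq_sum (s := S) (fun z hz => if_neg hz)]
  rw [Finset.sum_congr rfl (fun z hz => if_pos hz)]
  simp

lemma esaus_eq (d t : ℕ) (D : ℕ → Finset (Fin d → ℤ)) :
    esaus d t (lazyPZ d) D = ∑' z : Fin d → ℤ, hsum t z D := by
  unfold esaus
  have h1 : ∀ ω : Fin (t + 1) → Fin d → ℤ,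
      (if ω 0 = 0 then (1 : ℝ≥0∞) else 0) *
        (∏ i : Fin t, lazyPZ d (ω i.castSucc) (ω i.succ)) *
        ((Finset.univ.biUnion fun s : Fin (t + 1) => (D s).image fun p => ω s + p).card : ℝ≥0∞)
      = ∑' z : Fin d → ℤ, (if ω 0 = 0 then (1 : ℝ≥0∞) else 0) *
          (∏ i : Fin t, lazyPZ d (ω i.castSucc) (ω i.succ)) *
          (if ∃ s : Fin (t + 1), z - ω s ∈ D s then (1 : ℝ≥0∞) else 0) := by
    intro ω
    rw [card_eq_tsum, ← ENNReal.tsum_mul_left]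
    refine tsum_congr fun z => ?_
    congr 1
    refine if_congr ?_ rfl rfl
    simp only [Finset.mem_biUnion, Finset.mem_image, Finset.mem_univ, true_and]
    constructor
    · rintro ⟨s, p, hp, he⟩
      refine ⟨s, ?_⟩
      rw [show z - ω s = p by rw [← he]; ring]
      exact hp
    · rintro ⟨s, hs⟩
      exact ⟨s, z - ω s, hs, by ring⟩
  rw [tsum_congr h1, ENNReal.tsum_comm]
  refine tsum_congr fun z => ?_
  unfold hsum
  rw [← Equiv.tsum_eq (⟨fun ω i => z - ω i, fun ω i => z - ω i,
      fun ω => by funext i; simp, fun ω => by funext i; simp⟩ :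
      (Fin (t + 1) → Fin d → ℤ) ≃ (Fin (t + 1) → Fin d → ℤ))
    (fun ν : Fin (t + 1) → Fin d → ℤ => (if ν 0 = z then (1 : ℝ≥0∞) else 0) *
      (∏ i : Fin t, lazyPZ d (ν i.castSucc) (ν i.succ)) *
      (if ∃ s : Fin (t + 1), ν s ∈ D s then (1 : ℝ≥0∞) else 0))]
  refine tsum_congr fun ω => ?_
  simp only [Equiv.coe_fn_mk]
  congr 1
  · congr 1
    · refine if_congr ?_ rfl rfl
      exact (sub_eq_self (a := z) (b := ω 0)).symm.trans (by tauto)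
    · exact Finset.prod_congr rfl fun i _ => (lazyPZ_congr (zdist_sub_left z _ _)).symm

end Assemble

theorem stmt11 (d t : ℕ)
    (σ : (Fin d → ℤ) → (Fin d → ℤ))
    (Hp Hm : Set (Fin d → ℤ))
    (hinv : ∀ x, σ (σ x) = x)
    (hiso : ∀ x y, zdist (σ x) (σ y) = zdist x y)
    (hdisj : Disjoint Hp Hm)
    (hmap : σ '' Hp = Hm)
    (hfix : ∀ x, x ∉ Hp → x ∉ Hm → σ x = x)
    (hhalf : ∀ x ∈ Hp, ∀ y ∈ Hp, zdist x y < zdist x (σ y))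
    (D : ℕ → Finset (Fin d → ℤ))
    (hsym : ∀ (s : ℕ) (z : Fin d → ℤ), z ∈ D s ↔ -z ∈ D s) :
    esaus d t (lazyPZ d) (fun s => rearr σ Hp Hm (D s)) ≤
      esaus d t (lazyPZ d) D := by
  rw [esaus_eq, esaus_eq]
  have J := Jmain hinv hiso hdisj hmap hfix hhalf t D
  have hterm : ∀ z, hsum t z (fun s => rearr σ Hp Hm (D s)) +
        hsum t (σ z) (fun s => rearr σ Hp Hm (D s)) ≤
      hsum t z D + hsum t (σ z) D := by
    intro z
    by_cases hzp : z ∈ Hp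
    · exact (J.1 z hzp).2.2
    by_cases hzm : z ∈ Hm
    · have h := (J.1 (σ z) (sigma_Hp hinv hmap hzm)).2.2
      rw [hinv] at h
      calc hsum t z (fun s => rearr σ Hp Hm (D s)) +
            hsum t (σ z) (fun s => rearr σ Hp Hm (D s))
          = hsum t (σ z) (fun s => rearr σ Hp Hm (D s)) +
            hsum t z (fun s => rearr σ Hp Hm (D s)) := by ring
        _ ≤ hsum t (σ z) D + hsum t z D := h
        _ = hsum t z D + hsum t (σ z) D := by ring
    · rw [hfix z hzp hzm]
      exact add_le_add (J.2 z hzp hzm) (J.2 z hzp hzm)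
  have hdbl : (∑' z, hsum t z (fun s => rearr σ Hp Hm (D s))) +
        (∑' z, hsum t (σ z) (fun s => rearr σ Hp Hm (D s))) ≤
      (∑' z, hsum t z D) + (∑' z, hsum t (σ z) D) := by
    rw [← ENNReal.tsum_add, ← ENNReal.tsum_add]
    exact Summable.tsum_le_tsum hterm ENNReal.summable ENNReal.summable
  rw [reindex_sigma hinv (fun z => hsum t z (fun s => rearr σ Hp Hm (D s))),
    reindex_sigma hinv (fun z => hsum t z D)] at hdbl
  have h2 : (2 : ℝ≥0∞) * (∑' z, hsum t z (fun s => rearr σ Hp Hm (D s))) ≤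
      2 * ∑' z, hsum t z D := by
    rw [two_mul, two_mul]
    exact hdbl
  exact (ENNReal.mul_le_mul_iff_right (by norm_num) (by norm_num)).mp h2
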